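/- Let F : ℝ → ℝ be continuous and define u : ℝ → ℝ by u(t) := ∫₀^t [ (t − s)·tanh s·tanh t + (tanh t − tanh s) ]·F(s) ds. Then u is twice differentiable, u''(t) + 2 sech²(t)·u(t) = F(t) for every t ∈ ℝ, and u(0) = 0, u'(0) = 0. -/

import Mathlib

open intervalIntegral

private lemma hasDerivAt_tanh' (t : ℝ) :
    HasDerivAt Real.tanh (1 - Real.tanh t ^ 2) t := by
  have hc : Real.cosh t ≠ 0 := (Real.cosh_pos t).ne'
  have h : HasDerivAt (fun x => Real.sinh x / Real.cosh x)
      ((Real.cosh t * Real.cosh t - Real.sinh t * Real.sinh t) / Real.cosh t ^ 2) t :=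
    (Real.hasDerivAt_sinh t).div (Real.hasDerivAt_cosh t) hc
  have heq : (fun x => Real.sinh x / Real.cosh x) = Real.tanh := by
    funext x; rw [Real.tanh_eq_sinh_div_cosh]
  rw [heq] at h
  convert h using 1
  rw [Real.tanh_eq_sinh_div_cosh]
  field_simp

private lemma sech_sq_eq (t : ℝ) :
    ((Real.cosh t)⁻¹) ^ 2 = 1 - Real.tanh t ^ 2 := by
  have hc : Real.cosh t ≠ 0 := (Real.cosh_pos t).ne'
  rw [Real.tanh_eq_sinh_div_cosh]
  field_simp
  linarith [Real.cosh_sq_sub_sinh_sq t]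

/-- The variation-of-parameters solution of the zero-mode ODE `u'' + 2 sech² t · u = F`
on the catenoidal cylinder: `u(t) = ∫₀ᵗ [(t−s) tanh s tanh t + (tanh t − tanh s)] F(s) ds`
is twice differentiable, solves the equation, and satisfies `u(0) = u'(0) = 0`. -/
theorem zero_mode_ode_solution (F : ℝ → ℝ) (hF : Continuous F) :
    let u : ℝ → ℝ := fun t => ∫ s in (0:ℝ)..t,
      ((t - s) * Real.tanh s * Real.tanh t + (Real.tanh t - Real.tanh s)) * F s
    (∀ t, DifferentiableAt ℝ u t) ∧
      (∀ t, DifferentiableAt ℝ (deriv u) t) ∧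
      (∀ t, deriv (deriv u) t + 2 * ((Real.cosh t)⁻¹) ^ 2 * u t = F t) ∧
      u 0 = 0 ∧ deriv u 0 = 0 := by
  intro u
  set T : ℝ → ℝ := Real.tanh with hT_def
  set a : ℝ → ℝ := fun t => ∫ s in (0:ℝ)..t, T s * F s with ha_def
  set b : ℝ → ℝ := fun t => ∫ s in (0:ℝ)..t, (s * T s - 1) * F s with hb_def
  have hTc : Continuous T := continuous_iff_continuousAt.2 fun x => (hasDerivAt_tanh' x).continuousAt
  have hi1 : ∀ t : ℝ, IntervalIntegrable (fun s => T s * F s) MeasureTheory.volume 0 t :=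
    fun t => (hTc.mul hF).intervalIntegrable 0 t
  have hi2 : ∀ t : ℝ, IntervalIntegrable (fun s => (s * T s - 1) * F s)
      MeasureTheory.volume 0 t :=
    fun t => (((continuous_id.mul hTc).sub continuous_const).mul hF).intervalIntegrable 0 t
  -- decomposition of u
  have hu_eq : ∀ t, u t = (t * T t - 1) * a t - T t * b t := by
    intro t
    have : u t = ∫ s in (0:ℝ)..t,
        ((t * T t - 1) * (T s * F s) - T t * ((s * T s - 1) * F s)) := by
      apply intervalIntegral.integral_congr
      intro s _
      ring
    rw [this, intervalIntegral.integral_sub ((hi1 t).const_mul _) ((hi2 t).const_mul _),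
        intervalIntegral.integral_const_mul, intervalIntegral.integral_const_mul]
  -- derivatives of a and b
  have ha' : ∀ t, HasDerivAt a (T t * F t) t := by
    intro t
    exact intervalIntegral.integral_hasDerivAt_right (hi1 t)
      ((hTc.mul hF).stronglyMeasurableAtFilter _ _) (hTc.mul hF).continuousAt
  have hb' : ∀ t, HasDerivAt b ((t * T t - 1) * F t) t := by
    intro t
    exact intervalIntegral.integral_hasDerivAt_right (hi2 t)
      ((((continuous_id.mul hTc).sub continuous_const).mul hF).stronglyMeasurableAtFilter _ _)
      (((continuous_id.mul hTc).sub continuous_const).mul hF).continuousAt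
  have hT' : ∀ t, HasDerivAt T (1 - T t ^ 2) t := hasDerivAt_tanh'
  -- first derivative of u
  set v : ℝ → ℝ := fun t => (T t + t * (1 - T t ^ 2)) * a t - (1 - T t ^ 2) * b t with hv_def
  have hu' : ∀ t, HasDerivAt u (v t) t := by
    intro t
    have hg : HasDerivAt (fun t => (t * T t - 1) * a t - T t * b t)
        (((1 * T t + t * (1 - T t ^ 2)) * a t + (t * T t - 1) * (T t * F t))
          - ((1 - T t ^ 2) * b t + T t * ((t * T t - 1) * F t))) t :=
      ((((hasDerivAt_id t).mul (hT' t)).sub_const 1).mul (ha' t)).sub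
        ((hT' t).mul (hb' t))
    have hval : ((1 * T t + t * (1 - T t ^ 2)) * a t + (t * T t - 1) * (T t * F t))
        - ((1 - T t ^ 2) * b t + T t * ((t * T t - 1) * F t)) = v t := by
      simp only [hv_def]; ring
    rw [hval] at hg
    exact hg.congr_of_eventuallyEq (Filter.Eventually.of_forall hu_eq)
  have hderiv_u : deriv u = v := funext fun t => (hu' t).deriv
  -- second derivative
  have hv' : ∀ t, HasDerivAt v
      ((((1 - T t ^ 2) + (1 * (1 - T t ^ 2) + t * (0 - 2 * T t ^ 1 * (1 - T t ^ 2)))) * a t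
          + (T t + t * (1 - T t ^ 2)) * (T t * F t))
        - ((0 - 2 * T t ^ 1 * (1 - T t ^ 2)) * b t + (1 - T t ^ 2) * ((t * T t - 1) * F t))) t := by
    intro t
    have hsech : HasDerivAt (fun t => 1 - T t ^ 2) (0 - 2 * T t ^ 1 * (1 - T t ^ 2)) t :=
      (hasDerivAt_const t (1 : ℝ)).sub ((hT' t).pow 2)
    exact (((hT' t).add ((hasDerivAt_id t).mul hsech)).mul (ha' t)).sub
      (hsech.mul (hb' t))
  refine ⟨fun t => (hu' t).differentiableAt, ?_, ?_, ?_, ?_⟩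
  · intro t
    rw [hderiv_u]
    exact (hv' t).differentiableAt
  · intro t
    rw [hderiv_u, (hv' t).deriv, sech_sq_eq, hu_eq]
    ring
  · simp only [u, intervalIntegral.integral_same]
  · rw [hderiv_u]
    simp only [hv_def, ha_def, hb_def, intervalIntegral.integral_same]
    ring
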